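/- Let f₁(t) = (π²−π−4)t⁶ − 2π(5−π)t⁵ − 3π(5−π)t⁴ − 4(5π−π²−2)t³ − 3π(5−π)t² − 2π(5−π)t + (π²−π−4). Then there exists λ₀ > 1 such that f₁(t) < 0 for t ∈ [1, λ₀) and f₁(t) > 0 for t ∈ (λ₀, +∞). -/

import Mathlib

open Real in
noncomputable def f₁ (t : ℝ) : ℝ :=
  (π ^ 2 - π - 4) * t ^ 6 - 2 * π * (5 - π) * t ^ 5 - 3 * π * (5 - π) * t ^ 4
    - 4 * (5 * π - π ^ 2 - 2) * t ^ 3 - 3 * π * (5 - π) * t ^ 2 - 2 * π * (5 - π) * t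
    + (π ^ 2 - π - 4)

open Real

lemma pi_lb : (3.141592 : ℝ) < π := Real.pi_gt_d6
lemma pi_ub : π < 3.141593 := Real.pi_lt_d6

lemma coeff_a_lb : (2.72 : ℝ) < π ^ 2 - π - 4 := by nlinarith [pi_lb, pi_ub]
lemma coeff_a_ub : π ^ 2 - π - 4 < 2.73 := by nlinarith [pi_lb, pi_ub]
lemma coeff_b_lb : (5.83 : ℝ) < π * (5 - π) := by nlinarith [pi_lb, pi_ub]
lemma coeff_b_ub : π * (5 - π) < 5.85 := by nlinarith [pi_lb, pi_ub]
lemma coeff_c_lb : (3.83 : ℝ) < 5 * π - π ^ 2 - 2 := by nlinarith [pi_lb, pi_ub]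
lemma coeff_c_ub : 5 * π - π ^ 2 - 2 < 3.84 := by nlinarith [pi_lb, pi_ub]

lemma f1_neg {t : ℝ} (h1 : 1 ≤ t) (h5 : t ≤ 5) : f₁ t < 0 := by
  have ha1 := coeff_a_lb; have ha2 := coeff_a_ub
  have hb1 := coeff_b_lb; have hb2 := coeff_b_ub
  have hc1 := coeff_c_lb; have hc2 := coeff_c_ub
  have ht4 : (0:ℝ) ≤ t^4 := by positivity
  have ht3 : (0:ℝ) ≤ t^3 := by positivity
  have ht2 : (0:ℝ) ≤ t^2 := by positivity
  have h51 : (0:ℝ) ≤ (5 - t) * (t - 1) := mul_nonneg (by linarith) (by linarith)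
  unfold f₁
  nlinarith [mul_nonneg h51 ht4, mul_nonneg h51 ht3, mul_nonneg h51 ht2,
    mul_nonneg (by linarith : (0:ℝ) ≤ 5 - t) ht4,
    mul_nonneg (by linarith : (0:ℝ) ≤ t - 1) ht4,
    mul_nonneg (by linarith : (0:ℝ) ≤ t - 1) ht3, h51,
    mul_nonneg (mul_nonneg h51 h51) ht2]

lemma f1_six : 0 < f₁ 6 := by
  have ha1 := coeff_a_lb
  have hb2 := coeff_b_ub
  have hc2 := coeff_c_ub
  unfold f₁; nlinarith

lemma f1_deriv (t : ℝ) : HasDerivAt f₁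
    (6*(π ^ 2 - π - 4) * t ^ 5 - 5*(2 * π * (5 - π)) * t ^ 4 - 4*(3 * π * (5 - π)) * t ^ 3
      - 3*(4 * (5 * π - π ^ 2 - 2)) * t ^ 2 - 2*(3 * π * (5 - π)) * t - 2 * π * (5 - π)) t := by
  have h : HasDerivAt (fun t : ℝ => (π ^ 2 - π - 4) * t ^ 6 - 2 * π * (5 - π) * t ^ 5 - 3 * π * (5 - π) * t ^ 4
    - 4 * (5 * π - π ^ 2 - 2) * t ^ 3 - 3 * π * (5 - π) * t ^ 2 - 2 * π * (5 - π) * t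
    + (π ^ 2 - π - 4))
    (6*(π ^ 2 - π - 4) * t ^ 5 - 5*(2 * π * (5 - π)) * t ^ 4 - 4*(3 * π * (5 - π)) * t ^ 3
      - 3*(4 * (5 * π - π ^ 2 - 2)) * t ^ 2 - 2*(3 * π * (5 - π)) * t - 2 * π * (5 - π)) t := by
    have := (((((((hasDerivAt_pow 6 t).const_mul (π ^ 2 - π - 4)).sub
      ((hasDerivAt_pow 5 t).const_mul (2 * π * (5 - π)))).sub
      ((hasDerivAt_pow 4 t).const_mul (3 * π * (5 - π)))).sub
      ((hasDerivAt_pow 3 t).const_mul (4 * (5 * π - π ^ 2 - 2)))).sub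
      ((hasDerivAt_pow 2 t).const_mul (3 * π * (5 - π)))).sub
      ((hasDerivAt_id t).const_mul (2 * π * (5 - π)))).add_const (π ^ 2 - π - 4)
    convert this using 1
    all_goals first | rfl | (funext x; simp) | (push_cast; ring)
  exact h

lemma f1_mono : StrictMonoOn f₁ (Set.Ici (5:ℝ)) := by
  have ha1 := coeff_a_lb
  have hb2 := coeff_b_ub
  have hc2 := coeff_c_ub
  apply strictMonoOn_of_deriv_pos (convex_Ici 5)
  · exact Continuous.continuousOn (by unfold f₁; continuity)
  · intro t ht
    rw [interior_Ici] at ht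
    rw [(f1_deriv t).deriv]
    have h5 : (5:ℝ) < t := ht
    have ht4 : (0:ℝ) ≤ t^4 := by positivity
    have ht3 : (0:ℝ) ≤ t^3 := by positivity
    have ht2 : (0:ℝ) ≤ t^2 := by positivity
    nlinarith [mul_nonneg (by linarith : (0:ℝ) ≤ t - 5) ht4,
      mul_nonneg (by linarith : (0:ℝ) ≤ t - 5) ht3,
      mul_nonneg (by linarith : (0:ℝ) ≤ t - 5) ht2,
      mul_nonneg (mul_nonneg (by linarith : (0:ℝ) ≤ t - 5) (by linarith : (0:ℝ) ≤ t - 5)) ht3,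
      mul_nonneg (by linarith : (0:ℝ) ≤ t - 5) (by linarith : (0:ℝ) ≤ t - 5)]

theorem stmt_10 :
    ∃ lam₀ > (1 : ℝ), (∀ t ∈ Set.Ico (1 : ℝ) lam₀, f₁ t < 0) ∧
      (∀ t ∈ Set.Ioi lam₀, 0 < f₁ t) := by
  have hc : ContinuousOn f₁ (Set.Icc 5 6) := Continuous.continuousOn (by unfold f₁; continuity)
  have h5 : f₁ 5 < 0 := f1_neg (by norm_num) le_rfl
  have h6 := f1_six
  obtain ⟨lam₀, hmem, hroot⟩ := intermediate_value_Icc (by norm_num : (5:ℝ) ≤ 6) hc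
    (⟨h5.le, h6.le⟩ : (0:ℝ) ∈ Set.Icc (f₁ 5) (f₁ 6))
  refine ⟨lam₀, by linarith [hmem.1], ?_, ?_⟩
  · intro t ht
    rcases le_or_gt t 5 with h | h
    · exact f1_neg ht.1 h
    · have := f1_mono (Set.mem_Ici.2 h.le) (Set.mem_Ici.2 hmem.1) ht.2
      linarith
  · intro t ht
    have h5t : (5:ℝ) ≤ t := by linarith [hmem.1, Set.mem_Ioi.1 ht]
    have := f1_mono (Set.mem_Ici.2 hmem.1) (Set.mem_Ici.2 h5t) ht
    linarith
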